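/- The polynomial ring R = k[x_1,…,x_{n+1}] is a free module of rank 2 over the invariant subring R^i = R^{s_i}, with basis {1, x_i}: every f ∈ R can be written uniquely as f = g + h·x_i with g, h ∈ R^i (namely g = P_i(f) and h = ∂_i(f)). -/

import Mathlib

open MvPolynomial

private lemma swap_swap_rename {n : ℕ} {k : Type*} [CommRing k] (a b : Fin (n + 1))
    (p : MvPolynomial (Fin (n + 1)) k) :
    rename (Equiv.swap a b) (rename (Equiv.swap a b) p) = p := by
  rw [rename_rename]
  have : (Equiv.swap a b) ∘ (Equiv.swap a b) = id := by
    funext x; simp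
  rw [this, rename_id, AlgHom.id_apply]

private lemma exists_divided_diff (n : ℕ) (k : Type*) [CommRing k] (i : Fin n)
    (f : MvPolynomial (Fin (n + 1)) k) :
    ∃ h : MvPolynomial (Fin (n + 1)) k,
      rename (Equiv.swap i.castSucc i.succ) h = h ∧
      h * (X i.castSucc - X i.succ) = f - rename (Equiv.swap i.castSucc i.succ) f := by
  have hXc : rename (Equiv.swap i.castSucc i.succ) (X i.castSucc : MvPolynomial (Fin (n+1)) k)
      = X i.succ := by simp
  have hXs : rename (Equiv.swap i.castSucc i.succ) (X i.succ : MvPolynomial (Fin (n+1)) k)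
      = X i.castSucc := by simp
  induction f using MvPolynomial.induction_on with
  | C a => exact ⟨0, by simp⟩
  | add p q hp hq =>
    obtain ⟨hp', hps, hpe⟩ := hp
    obtain ⟨hq', hqs, hqe⟩ := hq
    exact ⟨hp' + hq', by rw [map_add, hps, hqs], by rw [map_add]; ring_nf; linear_combination hpe + hqe⟩
  | mul_X p j hp =>
    obtain ⟨h, hs, he⟩ := hp
    by_cases hj : j = i.castSucc
    · subst hj
      refine ⟨h * X i.castSucc + rename (Equiv.swap i.castSucc i.succ) p, ?_, ?_⟩
      · rw [map_add, map_mul, hs, hXc, swap_swap_rename]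
        linear_combination -he
      · rw [map_mul, hXc]
        linear_combination (X i.castSucc : MvPolynomial (Fin (n+1)) k) * he
    · by_cases hj' : j = i.succ
      · subst hj'
        refine ⟨h * X i.succ - rename (Equiv.swap i.castSucc i.succ) p, ?_, ?_⟩
        · rw [map_sub, map_mul, hs, hXs, swap_swap_rename]
          linear_combination he
        · rw [map_mul, hXs]
          linear_combination (X i.succ : MvPolynomial (Fin (n+1)) k) * he
      · have hj2 : rename (Equiv.swap i.castSucc i.succ) (X j : MvPolynomial (Fin (n+1)) k)
            = X j := by
          rw [rename_X, Equiv.swap_apply_of_ne_of_ne hj hj']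
        refine ⟨h * X j, by rw [map_mul, hs, hj2], ?_⟩
        rw [map_mul, hj2]
        linear_combination (X j : MvPolynomial (Fin (n+1)) k) * he

private lemma X_sub_X_regular (n : ℕ) (k : Type*) [CommRing k] (i : Fin n)
    {q : MvPolynomial (Fin (n + 1)) k}
    (hq : q * (X i.castSucc - X i.succ) = 0) : q = 0 := by
  set ψ := (renameEquiv k (Equiv.swap (0 : Fin (n+1)) i.castSucc)).trans
    (MvPolynomial.finSuccEquiv k n) with hψ
  have h1 : ψ (X i.castSucc) = Polynomial.X := by
    simp [hψ, renameEquiv_apply, finSuccEquiv_X_zero]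
  have h2 : ψ (X i.succ) = Polynomial.C (X i) := by
    have hne0 : i.succ ≠ (0 : Fin (n+1)) := Fin.succ_ne_zero i
    have hnec : i.succ ≠ i.castSucc := (Fin.castSucc_lt_succ : i.castSucc < i.succ).ne'
    simp [hψ, renameEquiv_apply, Equiv.swap_apply_of_ne_of_ne hne0 hnec,
      finSuccEquiv_X_succ]
  have h0 : ψ q * (Polynomial.X - Polynomial.C (X i)) = 0 := by
    rw [← h1, ← h2, ← map_sub, ← map_mul, hq, map_zero]
  have hmonic : (Polynomial.X - Polynomial.C (X i : MvPolynomial (Fin n) k)).Monic :=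
    Polynomial.monic_X_sub_C _
  have hq0 : ψ q = 0 := hmonic.mul_right_eq_zero_iff.mp (by rw [mul_comm]; exact h0)
  exact ψ.injective (by rw [hq0, map_zero])

/-- `R = k[x_1,…,x_{n+1}]` is free of rank 2 over the subring of `s_i`-invariants, with
basis `{1, x_i}`: every `f` is uniquely `f = g + h·x_i` with `g, h` invariant under
`s_i = (i, i+1)`. -/
theorem poly_free_rank_two_over_invariants (n : ℕ) (k : Type*) [CommRing k] (i : Fin n)
    (f : MvPolynomial (Fin (n + 1)) k) :
    ∃! p : MvPolynomial (Fin (n + 1)) k × MvPolynomial (Fin (n + 1)) k,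
      rename (Equiv.swap i.castSucc i.succ) p.1 = p.1 ∧
      rename (Equiv.swap i.castSucc i.succ) p.2 = p.2 ∧
      f = p.1 + p.2 * X i.castSucc := by
  obtain ⟨h, hs, he⟩ := exists_divided_diff n k i f
  refine ⟨⟨f - h * X i.castSucc, h⟩, ⟨?_, hs, by ring⟩, ?_⟩
  · -- invariance of g = f - h * X i
    simp only [map_sub, map_mul, hs, rename_X, Equiv.swap_apply_left]
    linear_combination he
  · rintro ⟨g', h'⟩ ⟨hg's, hh's, hfe⟩
    have key : (h' - h) * (X i.castSucc - X i.succ) = 0 := by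
      have e1 : g' - (f - h * X i.castSucc) = (h - h') * X i.castSucc := by
        linear_combination -hfe
      have e2 : g' - (f - h * X i.castSucc) = (h - h') * X i.succ := by
        have := congrArg (rename (Equiv.swap i.castSucc i.succ)) e1
        simp only [map_sub, map_mul, hg's, hs, hh's, rename_X, Equiv.swap_apply_left] at this
        linear_combination this + he
      linear_combination e1 - e2
    have hh : h' = h := sub_eq_zero.mp (X_sub_X_regular n k i key)
    subst hh
    have : g' = f - h' * X i.castSucc := by linear_combination -hfe
    rw [Prod.mk.injEq]
    exact ⟨this, rfl⟩
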